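/- Let E be a set and Z : E⁴ → ℝ. Define NCycle_n(x) = ∑_{j=0}^{n-1} Z(x_j, x_{j+1}, x_{j+2}, x_{j+3}) with indices mod n. Then for all a,b,c,d,e,f,g ∈ E: NCycle_7(a,b,c,d,e,f,g) = −NCycle_6(e,f,g,d,e,f) + NCycle_4(e,f,g,d) + NCycle_6(e,f,a,d,e,f) − NCycle_4(e,f,a,d) + NCycle_6(e,f,g,c,e,f) − NCycle_4(e,f,g,c) − NCycle_6(e,f,a,c,e,f) + NCycle_4(e,f,a,c) + NCycle_6(a,b,c,d,e,f) + NCycle_6(a,b,c,e,f,g) − NCycle_5(a,b,c,e,f). -/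

import Mathlib

/-- Cyclic sum of `Z` over length-4 cyclic factors of a word of length `n`. -/
def ncyc {E : Type*} (Z : E → E → E → E → ℝ) (n : ℕ) (x : ℕ → E) : ℝ :=
  ∑ j ∈ Finset.range n,
    Z (x (j % n)) (x ((j+1) % n)) (x ((j+2) % n)) (x ((j+3) % n))

/-- View a finite tuple as a periodic word indexed by `ℕ`. -/
def ofT {E : Type*} {n : ℕ} [NeZero n] (v : Fin n → E) : ℕ → E :=
  fun j => v (Fin.ofNat n j)

private lemma v6 {E : Type*} (a b c d e f : E) : (![a,b,c,d,e,f] : Fin 6 → E) 5 = f := rfl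
private lemma v75 {E : Type*} (a b c d e f g : E) : (![a,b,c,d,e,f,g] : Fin 7 → E) 5 = f := rfl
private lemma v76 {E : Type*} (a b c d e f g : E) : (![a,b,c,d,e,f,g] : Fin 7 → E) 6 = g := rfl

/-- `NCycle_7` as a combination of `NCycle_4`, `NCycle_5`, `NCycle_6`. -/
theorem stmt3 {E : Type*} (Z : E → E → E → E → ℝ) (a b c d e f g : E) :
    ncyc Z 7 (ofT ![a,b,c,d,e,f,g])
      = -ncyc Z 6 (ofT ![e,f,g,d,e,f]) + ncyc Z 4 (ofT ![e,f,g,d])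
        + ncyc Z 6 (ofT ![e,f,a,d,e,f]) - ncyc Z 4 (ofT ![e,f,a,d])
        + ncyc Z 6 (ofT ![e,f,g,c,e,f]) - ncyc Z 4 (ofT ![e,f,g,c])
        - ncyc Z 6 (ofT ![e,f,a,c,e,f]) + ncyc Z 4 (ofT ![e,f,a,c])
        + ncyc Z 6 (ofT ![a,b,c,d,e,f])
        + ncyc Z 6 (ofT ![a,b,c,e,f,g]) - ncyc Z 5 (ofT ![a,b,c,e,f]) := by
  simp only [ncyc, ofT, Finset.sum_range_succ, Finset.sum_range_zero]
  norm_num [v6, v75, v76, Fin.ofNat, Matrix.cons_val]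
  ring
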